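/- Let R be a Noetherian ring of finite Krull dimension and d a natural number. Then len R = ω^d if and only if R is an integral domain of Krull dimension d, where len R is the ordinal length of R as a module over itself. -/

import Mathlib

open Ordinal

/-- The ordinal length of a Noetherian module: the rank of the zero submodule in the
well-founded order of submodules under reverse inclusion. -/
noncomputable def moduleLength (R M : Type*) [Ring R] [AddCommGroup M] [Module R M]
    [IsNoetherian R M] : Ordinal :=
  IsWellFounded.rank (α := Submodule R M) (· > ·) ⊥

universe u

/-- Natural (Hessenberg) addition of ordinals. -/
noncomputable def nadd : Ordinal.{u} → Ordinal.{u} → Ordinal.{u}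
  | a, b => max (⨆ x : Set.Iio a, Order.succ (nadd x.1 b)) (⨆ y : Set.Iio b, Order.succ (nadd a y.1))
termination_by a b => (a, b)
decreasing_by
  · exact Prod.Lex.left _ _ x.2
  · exact Prod.Lex.right _ y.2

infixl:65 " ♯ " => nadd

theorem nadd_def (a b : Ordinal.{u}) : a ♯ b =
    max (⨆ x : Set.Iio a, Order.succ (x.1 ♯ b)) (⨆ y : Set.Iio b, Order.succ (a ♯ y.1)) := by
  rw [nadd]

theorem nadd_lt_nadd_right {b c : Ordinal.{u}} (h : b < c) (a : Ordinal.{u}) : b ♯ a < c ♯ a := by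
  rw [nadd_def c a]
  calc b ♯ a < Order.succ (b ♯ a) := Order.lt_succ _
    _ ≤ ⨆ x : Set.Iio c, Order.succ (x.1 ♯ a) :=
        le_ciSup (f := fun x : Set.Iio c => Order.succ (x.1 ♯ a)) Ordinal.bddAbove_of_small ⟨b, h⟩
    _ ≤ _ := le_max_left _ _

theorem nadd_lt_nadd_left {b c : Ordinal.{u}} (h : b < c) (a : Ordinal.{u}) : a ♯ b < a ♯ c := by
  rw [nadd_def a c]
  calc a ♯ b < Order.succ (a ♯ b) := Order.lt_succ _
    _ ≤ ⨆ y : Set.Iio c, Order.succ (a ♯ y.1) :=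
        le_ciSup (f := fun y : Set.Iio c => Order.succ (a ♯ y.1)) Ordinal.bddAbove_of_small ⟨b, h⟩
    _ ≤ _ := le_max_right _ _

theorem nadd_le_iff {a b c : Ordinal.{u}} :
    a ♯ b ≤ c ↔ (∀ a' < a, a' ♯ b < c) ∧ ∀ b' < b, a ♯ b' < c := by
  constructor
  · intro h
    exact ⟨fun a' ha => (nadd_lt_nadd_right ha b).trans_le h,
      fun b' hb => (nadd_lt_nadd_left hb a).trans_le h⟩
  · rintro ⟨h1, h2⟩
    rw [nadd_def]
    exact max_le (ciSup_le' fun x => Order.succ_le_of_lt (h1 x.1 x.2))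
      (ciSup_le' fun y => Order.succ_le_of_lt (h2 y.1 y.2))

theorem nadd_le_nadd_right {b c : Ordinal.{u}} (h : b ≤ c) (a : Ordinal.{u}) : b ♯ a ≤ c ♯ a := by
  rcases h.lt_or_eq with h | rfl
  · exact (nadd_lt_nadd_right h a).le
  · exact le_rfl

theorem nadd_le_nadd_left {b c : Ordinal.{u}} (h : b ≤ c) (a : Ordinal.{u}) : a ♯ b ≤ a ♯ c := by
  rcases h.lt_or_eq with h | rfl
  · exact (nadd_lt_nadd_left h a).le
  · exact le_rfl

theorem nadd_le_nadd {a b c d : Ordinal.{u}} (h1 : a ≤ b) (h2 : c ≤ d) : a ♯ c ≤ b ♯ d :=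
  (nadd_le_nadd_left h2 a).trans (nadd_le_nadd_right h1 d)

theorem nadd_lt_nadd_of_lt_of_le {a b c d : Ordinal.{u}} (h1 : a < b) (h2 : c ≤ d) :
    a ♯ c < b ♯ d :=
  (nadd_lt_nadd_right h1 c).trans_le (nadd_le_nadd_left h2 b)

theorem nadd_lt_nadd_of_le_of_lt {a b c d : Ordinal.{u}} (h1 : a ≤ b) (h2 : c < d) :
    a ♯ c < b ♯ d :=
  (nadd_lt_nadd_left h2 a).trans_le (nadd_le_nadd_right h1 d)

theorem nadd_comm (a b : Ordinal.{u}) : a ♯ b = b ♯ a := by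
  induction a using Ordinal.induction generalizing b with
  | _ a IHa =>
  induction b using Ordinal.induction with
  | _ b IHb =>
  apply le_antisymm
  · rw [nadd_le_iff]
    exact ⟨fun a' h => by rw [IHa a' h b]; exact nadd_lt_nadd_left h b,
      fun b' h => by rw [IHb b' h]; exact nadd_lt_nadd_right h a⟩
  · rw [nadd_le_iff]
    exact ⟨fun b' h => by rw [← IHb b' h]; exact nadd_lt_nadd_left h a,
      fun a' h => by rw [← IHa a' h b]; exact nadd_lt_nadd_right h b⟩

@[simp] theorem nadd_zero (a : Ordinal.{u}) : a ♯ 0 = a := by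
  induction a using Ordinal.induction with
  | _ a IH =>
  apply le_antisymm
  · rw [nadd_le_iff]
    exact ⟨fun a' h => by rw [IH a' h]; exact h, fun b' h => by simp at h⟩
  · by_contra hlt
    push_neg at hlt
    have := nadd_lt_nadd_right hlt 0
    rw [IH _ hlt] at this
    exact lt_irrefl _ this

section RankLemmas

variable {α β : Type u} [Preorder α] [Preorder β] [WellFoundedGT α] [WellFoundedGT β]

theorem rank_le_rank_of_strictMono (f : α → β) (hf : StrictMono f) (a : α) :
    IsWellFounded.rank (α := α) (· > ·) a ≤ IsWellFounded.rank (α := β) (· > ·) (f a) := by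
  induction a using IsWellFounded.induction (α := α) (· > ·) with
  | _ x IH =>
    rw [IsWellFounded.rank_eq]
    refine Ordinal.iSup_le fun b => ?_
    rw [Order.succ_le_iff]
    exact (IH b b.2).trans_lt (IsWellFounded.rank_lt_of_rel (hf b.2))

theorem rank_le_rank_of_strictMono_of_surjOn (f : α → β) (hf : StrictMono f)
    (hsurj : ∀ (a : α) (b : β), f a < b → ∃ a' : α, a < a' ∧ f a' = b) (a : α) :
    IsWellFounded.rank (α := β) (· > ·) (f a) ≤ IsWellFounded.rank (α := α) (· > ·) a := by
  induction a using IsWellFounded.induction (α := α) (· > ·) with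
  | _ x IH =>
    rw [IsWellFounded.rank_eq ((· > ·) : β → β → Prop) (f x)]
    refine Ordinal.iSup_le fun b => ?_
    rw [Order.succ_le_iff]
    obtain ⟨a', ha', hfa⟩ := hsurj x b b.2
    have h2 := (IH a' ha').trans_lt (IsWellFounded.rank_lt_of_rel (r := ((· > ·) : α → α → Prop)) ha')
    rwa [hfa] at h2

theorem rank_eq_rank_of_strictMono_of_surjOn (f : α → β) (hf : StrictMono f)
    (hsurj : ∀ (a : α) (b : β), f a < b → ∃ a' : α, a < a' ∧ f a' = b) (a : α) :
    IsWellFounded.rank (α := β) (· > ·) (f a) = IsWellFounded.rank (α := α) (· > ·) a :=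
  le_antisymm (rank_le_rank_of_strictMono_of_surjOn f hf hsurj a)
    (rank_le_rank_of_strictMono f hf a)

end RankLemmas

section NaddLemmas

theorem nadd_mul_add_le (c : Ordinal.{u}) (hc : ∀ x y, x < c → y < c → x ♯ y < c)
    (hc0 : c ≠ 0) (μ : Ordinal.{u}) :
    ∀ (k l : ℕ) (r s : Ordinal.{u}), r < c → s < c →
      c * (k + l : ℕ) + (r ♯ s) = μ → (c * k + r) ♯ (c * l + s) ≤ c * (k + l : ℕ) + (r ♯ s) := by
  induction μ using Ordinal.induction with
  | _ μ IH =>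
    have key : ∀ (k l : ℕ) (r s : Ordinal.{u}), r < c → s < c →
        c * (k + l : ℕ) + (r ♯ s) = μ →
        ∀ x < c * k + r, x ♯ (c * l + s) < c * (k + l : ℕ) + (r ♯ s) := by
      intro k l r s hr hs hμ x hx
      have hk' : x / c < (k : Ordinal) + 1 := by
        rw [Ordinal.div_lt hc0]
        calc x < c * k + r := hx
          _ < c * k + c := add_lt_add_right hr _
          _ = c * ((k : Ordinal) + 1) := by rw [mul_add_one]
      obtain ⟨k', hk'eq⟩ : ∃ k' : ℕ, x / c = (k' : Ordinal) := by
        refine lt_omega0.1 (hk'.trans_le ?_)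
        exact_mod_cast (nat_lt_omega0 (k + 1)).le
      have hk'le : k' ≤ k := by
        rw [hk'eq] at hk'
        have : k' < k + 1 := by exact_mod_cast hk'
        omega
      have hr' : x % c < c := Ordinal.mod_lt x hc0
      have hxeq : x = c * k' + x % c := by
        conv_lhs => rw [← Ordinal.div_add_mod x c]
        rw [hk'eq]
      rcases lt_or_eq_of_le hk'le with hlt | heq
      · have hmeas : c * (k' + l : ℕ) + (x % c ♯ s) < μ := by
          rw [← hμ]
          calc c * (k' + l : ℕ) + (x % c ♯ s) < c * (k' + l : ℕ) + c :=
                add_lt_add_right (hc _ _ hr' hs) _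
            _ = c * ((k' + l : ℕ) + 1) := by rw [mul_add_one]
            _ ≤ c * ((k + l : ℕ) : Ordinal) := by
                apply mul_le_mul_right
                exact_mod_cast Nat.succ_le_of_lt (by omega)
            _ ≤ c * (k + l : ℕ) + (r ♯ s) := le_self_add
        calc x ♯ (c * l + s) = (c * k' + x % c) ♯ (c * l + s) := by rw [← hxeq]
          _ ≤ c * (k' + l : ℕ) + (x % c ♯ s) := IH _ hmeas k' l _ s hr' hs rfl
          _ < c * (k + l : ℕ) + (r ♯ s) := hμ ▸ hmeas
      · rw [heq] at hxeq
        have hrr : x % c < r := by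
          rw [hxeq] at hx
          exact (add_lt_add_iff_left _).1 hx
        have hmeas : c * (k + l : ℕ) + (x % c ♯ s) < μ := by
          rw [← hμ]
          exact add_lt_add_right (nadd_lt_nadd_right hrr s) _
        calc x ♯ (c * l + s) = (c * k + x % c) ♯ (c * l + s) := by rw [← hxeq]
          _ ≤ c * (k + l : ℕ) + (x % c ♯ s) := IH _ hmeas k l _ s hr' hs rfl
          _ < c * (k + l : ℕ) + (r ♯ s) := hμ ▸ hmeas
    intro k l r s hr hs hμ
    rw [nadd_le_iff]
    constructor
    · exact fun x hx => key k l r s hr hs hμ x hx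
    · intro y hy
      have h2 : c * (l + k : ℕ) + (s ♯ r) = μ := by
        rw [← hμ, Nat.add_comm l k, nadd_comm s r]
      have := key l k s r hs hr h2 y hy
      rw [nadd_comm]
      calc y ♯ (c * k + r) < c * (l + k : ℕ) + (s ♯ r) := this
        _ = c * (k + l : ℕ) + (r ♯ s) := by rw [Nat.add_comm l k, nadd_comm s r]

theorem nadd_lt_omega0_opow_nat (n : ℕ) {a b : Ordinal.{u}}
    (ha : a < ω ^ (n : Ordinal)) (hb : b < ω ^ (n : Ordinal)) : a ♯ b < ω ^ (n : Ordinal) := by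
  induction n generalizing a b with
  | zero =>
    simp only [Nat.cast_zero, opow_zero, lt_one_iff_zero] at ha hb
    subst ha; subst hb; simpa using opow_pos (0 : Ordinal) omega0_pos
  | succ n IHn =>
    have hsucc : (ω : Ordinal) ^ ((n + 1 : ℕ) : Ordinal) = ω ^ (n : Ordinal) * ω := by
      push_cast
      rw [opow_add, opow_one]
    rw [hsucc] at ha hb ⊢
    obtain ⟨x, hx, hax⟩ := (lt_mul_iff_of_isSuccLimit isSuccLimit_omega0).1 ha
    obtain ⟨y, hy, hby⟩ := (lt_mul_iff_of_isSuccLimit isSuccLimit_omega0).1 hb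
    obtain ⟨m, rfl⟩ := lt_omega0.1 hx
    obtain ⟨k, rfl⟩ := lt_omega0.1 hy
    have h0 : (ω : Ordinal) ^ (n : Ordinal) ≠ 0 := (opow_pos _ omega0_pos).ne'
    have hbound := nadd_mul_add_le (ω ^ (n : Ordinal)) (fun x y hx hy => IHn hx hy) h0
      (ω ^ (n : Ordinal) * (m + k : ℕ) + (0 ♯ 0)) m k 0 0 (opow_pos _ omega0_pos)
      (opow_pos _ omega0_pos) rfl
    simp only [nadd_zero, add_zero] at hbound
    calc a ♯ b ≤ (ω ^ (n : Ordinal) * m) ♯ (ω ^ (n : Ordinal) * k) :=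
          nadd_le_nadd hax.le hby.le
      _ ≤ ω ^ (n : Ordinal) * (m + k : ℕ) := hbound
      _ < ω ^ (n : Ordinal) * ω := by
          apply mul_lt_mul_of_pos_left (nat_lt_omega0 _) (opow_pos _ omega0_pos)

end NaddLemmas

section ModuleLength

variable {R M : Type u} [Ring R] [AddCommGroup M] [Module R M] [IsNoetherian R M]

/-- rank of a submodule in the reverse-inclusion order -/
noncomputable def Submodule.wrank (N : Submodule R M) : Ordinal.{u} :=
  IsWellFounded.rank (α := Submodule R M) (· > ·) N

theorem Submodule.wrank_anti : Antitone (Submodule.wrank (R := R) (M := M)) := by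
  have : StrictAnti (Submodule.wrank (R := R) (M := M)) :=
    fun _ _ h => IsWellFounded.rank_lt_of_rel h
  exact this.antitone

theorem Submodule.wrank_lt {N N' : Submodule R M} (h : N < N') : N'.wrank < N.wrank :=
  IsWellFounded.rank_lt_of_rel h

theorem moduleLength_eq_wrank : moduleLength R M = (⊥ : Submodule R M).wrank := rfl

@[simp] theorem Submodule.wrank_top : (⊤ : Submodule R M).wrank = 0 := by
  rw [Submodule.wrank, IsWellFounded.rank_eq]
  have : IsEmpty {b : Submodule R M // b > ⊤} := ⟨fun b => (not_top_lt b.2).elim⟩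
  exact ciSup_of_empty _

/-- length of quotient equals rank of the submodule -/
theorem wrank_eq_moduleLength_quotient (N : Submodule R M) :
    N.wrank = moduleLength R (M ⧸ N) := by
  have hcomap : StrictMono (fun X : Submodule R (M ⧸ N) => X.comap N.mkQ) := by
    intro a b hab
    refine lt_of_le_of_ne (Submodule.comap_mono hab.le) (fun h => hab.ne ?_)
    exact Submodule.comap_injective_of_surjective (Submodule.mkQ_surjective N) h
  have hsurj : ∀ (a : Submodule R (M ⧸ N)) (b : Submodule R M),
      a.comap N.mkQ < b → ∃ a', a < a' ∧ Submodule.comap N.mkQ a' = b := by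
    intro a b hb
    have hNb : N ≤ b := by
      refine le_trans ?_ hb.le
      intro x hx
      simp only [Submodule.mem_comap]
      have hx0 : N.mkQ x = 0 := by rwa [← LinearMap.mem_ker, Submodule.ker_mkQ]
      rw [hx0]; exact a.zero_mem
    refine ⟨b.map N.mkQ, ?_, ?_⟩
    · have h1 : Submodule.comap N.mkQ (Submodule.map N.mkQ b) = b := by
        rw [Submodule.comap_map_mkQ, sup_of_le_right hNb]
      refine lt_of_le_of_ne ?_ (fun h => hb.ne ?_)
      · rw [← Submodule.map_comap_eq_of_surjective (Submodule.mkQ_surjective N) a]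
        exact Submodule.map_mono hb.le
      · rw [h, h1]
    · rw [Submodule.comap_map_mkQ, sup_of_le_right hNb]
  have := rank_eq_rank_of_strictMono_of_surjOn _ hcomap hsurj (⊥ : Submodule R (M ⧸ N))
  rw [moduleLength_eq_wrank, Submodule.wrank, Submodule.wrank, ← this, Submodule.comap_bot,
    Submodule.ker_mkQ]

theorem moduleLength_congr {M' : Type u} [AddCommGroup M'] [Module R M'] [IsNoetherian R M']
    (e : M ≃ₗ[R] M') : moduleLength R M = moduleLength R M' := by
  have hiso := Submodule.orderIsoMapComap e
  have := rank_eq_rank_of_strictMono_of_surjOn (fun X : Submodule R M => hiso X)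
    hiso.strictMono (fun a b hb => ⟨hiso.symm b, by
      simpa using hiso.symm.strictMono hb, by simp⟩) (⊥ : Submodule R M)
  rw [moduleLength_eq_wrank, moduleLength_eq_wrank, Submodule.wrank, Submodule.wrank, ← this]
  congr 1
  simpa using map_bot (e : M →ₗ[R] M')

theorem moduleLength_eq_zero_of_subsingleton (h : Subsingleton M) : moduleLength R M = 0 := by
  rw [moduleLength, IsWellFounded.rank_eq]
  have : IsEmpty {b : Submodule R M // b > ⊥} := by
    constructor
    rintro ⟨b, hb⟩
    exact hb.ne' (Subsingleton.elim _ _)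
  exact ciSup_of_empty _

theorem one_le_moduleLength_of_nontrivial (h : Nontrivial M) : 1 ≤ moduleLength R M := by
  have : (⊥ : Submodule R M) < ⊤ := bot_lt_top
  have := Submodule.wrank_lt this
  rw [Submodule.wrank_top] at this
  rw [moduleLength_eq_wrank]
  exact Order.one_le_iff_pos.2 this

/-- key subadditivity: `len M ≤ len N ♯ len (M ⧸ N)` -/
theorem moduleLength_le_nadd (N : Submodule R M) :
    moduleLength R M ≤ moduleLength R N ♯ moduleLength R (M ⧸ N) := by
  have main : ∀ K : Submodule R M,
      K.wrank ≤ (K.comap N.subtype).wrank ♯ (K.map N.mkQ).wrank := by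
    intro K
    induction K using IsWellFounded.induction (α := Submodule R M) (· > ·) with
    | _ K IH =>
      rw [Submodule.wrank, IsWellFounded.rank_eq]
      refine Ordinal.iSup_le fun b => ?_
      obtain ⟨K', hK'⟩ := b
      rw [Order.succ_le_iff]
      have hc : K.comap N.subtype ≤ K'.comap N.subtype := Submodule.comap_mono hK'.le
      have hm : K.map N.mkQ ≤ K'.map N.mkQ := Submodule.map_mono hK'.le
      have hne : K.comap N.subtype < K'.comap N.subtype ∨ K.map N.mkQ < K'.map N.mkQ := by
        by_contra hcon
        push_neg at hcon
        have h1 : K.comap N.subtype = K'.comap N.subtype := hc.lt_or_eq.resolve_left hcon.1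
        have h2 : K.map N.mkQ = K'.map N.mkQ := hm.lt_or_eq.resolve_left hcon.2
        -- modularity: conclude K' ≤ K, contradiction
        have hKN : K ⊓ N = K' ⊓ N := by
          have := congrArg (Submodule.map N.subtype) h1
          rwa [Submodule.map_comap_subtype, Submodule.map_comap_subtype, inf_comm N K,
            inf_comm N K'] at this
        have : K' ≤ K := by
          intro x hx
          have hxq : N.mkQ x ∈ K.map N.mkQ := by
            rw [h2]; exact ⟨x, hx, rfl⟩
          obtain ⟨y, hy, hyx⟩ := hxq
          have hxy : x - y ∈ N := by
            have h0 : N.mkQ (x - y) = 0 := by rw [map_sub, hyx]; simp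
            rwa [← LinearMap.mem_ker, Submodule.ker_mkQ] at h0
          have hxyK : x - y ∈ K' ⊓ N := ⟨sub_mem hx (hK'.le hy), hxy⟩
          rw [← hKN] at hxyK
          simpa using add_mem hxyK.1 hy
        exact hK'.not_ge this
      have hb := IH K' hK'
      calc (K' : Submodule R M).wrank
          ≤ (K'.comap N.subtype).wrank ♯ (K'.map N.mkQ).wrank := hb
        _ < (K.comap N.subtype).wrank ♯ (K.map N.mkQ).wrank := by
            rcases hne with h | h
            · exact nadd_lt_nadd_of_lt_of_le (Submodule.wrank_lt h) (Submodule.wrank_anti hm)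
            · exact nadd_lt_nadd_of_le_of_lt (Submodule.wrank_anti hc) (Submodule.wrank_lt h)
  have := main ⊥
  rw [← moduleLength_eq_wrank] at this
  have h1 : (⊥ : Submodule R M).comap N.subtype = ⊥ := by
    rw [Submodule.comap_bot, Submodule.ker_subtype]
  have h2 : (⊥ : Submodule R M).map N.mkQ = ⊥ := Submodule.map_bot _
  rw [h1, h2] at this
  calc moduleLength R M ≤ (⊥ : Submodule R N).wrank ♯ (⊥ : Submodule R (M ⧸ N)).wrank := this
    _ = moduleLength R N ♯ moduleLength R (M ⧸ N) := by
        rw [← moduleLength_eq_wrank, ← moduleLength_eq_wrank]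

/-- superadditivity: `len (M⧸N) + len N ≤ len M` -/
theorem add_moduleLength_le (N : Submodule R M) :
    moduleLength R (M ⧸ N) + moduleLength R N ≤ moduleLength R M := by
  have main : ∀ K : Submodule R N, N.wrank + K.wrank ≤ (K.map N.subtype).wrank := by
    intro K
    induction K using IsWellFounded.induction (α := Submodule R N) (· > ·) with
    | _ K IH =>
      have hmapK : K.map N.subtype ≤ N := by
        calc K.map N.subtype ≤ (⊤ : Submodule R N).map N.subtype := Submodule.map_mono le_top
          _ = N := Submodule.map_subtype_top N
      have hXN : N.wrank ≤ (K.map N.subtype).wrank := Submodule.wrank_anti hmapK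
      have hstep : K.wrank ≤ (K.map N.subtype).wrank - N.wrank := by
        rw [Submodule.wrank, IsWellFounded.rank_eq]
        refine Ordinal.iSup_le fun b => ?_
        obtain ⟨K', hK'⟩ := b
        have hmaplt : K.map N.subtype < K'.map N.subtype := by
          refine lt_of_le_of_ne (Submodule.map_mono hK'.le) fun h => hK'.ne ?_
          have := congrArg (Submodule.comap N.subtype) h
          rwa [Submodule.comap_map_eq, Submodule.comap_map_eq, Submodule.ker_subtype,
            sup_bot_eq, sup_bot_eq] at this
        have := IH K' hK'
        have h2 : N.wrank + Order.succ (K' : Submodule R N).wrank ≤ (K.map N.subtype).wrank := by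
          have : N.wrank + (K' : Submodule R N).wrank < (K.map N.subtype).wrank :=
            lt_of_le_of_lt this (Submodule.wrank_lt hmaplt)
          rwa [Ordinal.add_succ, Order.succ_le_iff]
        exact Ordinal.le_sub_of_add_le h2
      calc N.wrank + K.wrank ≤ N.wrank + ((K.map N.subtype).wrank - N.wrank) :=
            add_le_add_right hstep _
        _ = (K.map N.subtype).wrank := Ordinal.add_sub_cancel_of_le hXN
  have := main ⊥
  rw [Submodule.map_bot] at this
  rw [← wrank_eq_moduleLength_quotient, moduleLength_eq_wrank, moduleLength_eq_wrank]
  exact this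

end ModuleLength

section Bridge


variable {R : Type u} [CommRing R]

/-- The lattice of `R⧸I`-submodules of `R⧸I` is isomorphic to the lattice of
`R`-submodules of `R⧸I`. -/
def idealQuotOrderIso (I : Ideal R) : Submodule (R ⧸ I) (R ⧸ I) ≃o Submodule R (R ⧸ I) where
  toFun p := p.restrictScalars R
  invFun q :=
    { carrier := q
      add_mem' := fun ha hb => q.add_mem ha hb
      zero_mem' := q.zero_mem
      smul_mem' := by
        intro c x hx
        obtain ⟨r, rfl⟩ := Ideal.Quotient.mk_surjective c
        have h : (Ideal.Quotient.mk I r) • x = r • x := by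
          show Ideal.Quotient.mk I r * x = r • x
          obtain ⟨s, rfl⟩ := Ideal.Quotient.mk_surjective x
          rw [← map_mul]
          rfl
        rw [h]
        exact q.smul_mem r hx }
  left_inv p := by ext x; rfl
  right_inv q := by ext x; rfl
  map_rel_iff' := Iff.rfl

theorem moduleLength_quotient_ring [IsNoetherianRing R] (I : Ideal R) :
    moduleLength R (R ⧸ I) = moduleLength (R ⧸ I) (R ⧸ I) := by
  have hiso := idealQuotOrderIso I
  have h := rank_eq_rank_of_strictMono_of_surjOn
    (fun X : Submodule (R ⧸ I) (R ⧸ I) => hiso X) hiso.strictMono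
    (fun a b hb => ⟨hiso.symm b, by simpa using hiso.symm.strictMono hb, by simp⟩)
    (⊥ : Submodule (R ⧸ I) (R ⧸ I))
  have hbot : hiso (⊥ : Submodule (R ⧸ I) (R ⧸ I)) = ⊥ := hiso.map_bot
  rw [moduleLength, moduleLength, ← h, hbot]

end Bridge

section Chains

variable {R S : Type u} [CommRing R] [CommRing S]

/-- Push a chain of primes forward along a surjective ring hom, provided all members
contain the kernel. -/
noncomputable def chainMapSurj (f : R →+* S) (hf : Function.Surjective f)
    (l : LTSeries (PrimeSpectrum R)) (hk : ∀ i, RingHom.ker f ≤ (l.toFun i).asIdeal) :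
    LTSeries (PrimeSpectrum S) where
  length := l.length
  toFun i := ⟨((l.toFun i).asIdeal).map f,
    haveI := (l.toFun i).isPrime
    Ideal.map_isPrime_of_surjective hf (hk i)⟩
  step i := by
    have hlt : (l.toFun i.castSucc).asIdeal < (l.toFun i.succ).asIdeal :=
      (PrimeSpectrum.asIdeal_lt_asIdeal _ _).2 (l.step i)
    change (_ : PrimeSpectrum S) < _
    rw [← PrimeSpectrum.asIdeal_lt_asIdeal]
    refine lt_of_le_of_ne (Ideal.map_mono hlt.le) fun heq => hlt.ne ?_
    have h2 := congrArg (Ideal.comap f) heq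
    rwa [Ideal.comap_map_of_surjective f hf, Ideal.comap_map_of_surjective f hf,
      ← RingHom.ker_eq_comap_bot, sup_eq_left.2 (hk i.castSucc), sup_eq_left.2 (hk i.succ)] at h2

@[simp] theorem chainMapSurj_length (f : R →+* S) (hf : Function.Surjective f)
    (l : LTSeries (PrimeSpectrum R)) (hk : ∀ i, RingHom.ker f ≤ (l.toFun i).asIdeal) :
    (chainMapSurj f hf l hk).length = l.length := rfl

/-- Pull a chain of primes back along a surjective ring hom. -/
noncomputable def chainComap (f : R →+* S) (hf : Function.Surjective f)
    (l : LTSeries (PrimeSpectrum S)) : LTSeries (PrimeSpectrum R) where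
  length := l.length
  toFun i := ⟨((l.toFun i).asIdeal).comap f,
    haveI := (l.toFun i).isPrime
    Ideal.IsPrime.comap f⟩
  step i := by
    have hlt : (l.toFun i.castSucc).asIdeal < (l.toFun i.succ).asIdeal :=
      (PrimeSpectrum.asIdeal_lt_asIdeal _ _).2 (l.step i)
    change (_ : PrimeSpectrum R) < _
    rw [← PrimeSpectrum.asIdeal_lt_asIdeal]
    refine lt_of_le_of_ne (Ideal.comap_mono hlt.le) fun heq => hlt.ne ?_
    have h2 := congrArg (Ideal.map f) heq
    rwa [Ideal.map_comap_of_surjective f hf, Ideal.map_comap_of_surjective f hf] at h2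

theorem ker_le_chainComap (f : R →+* S) (hf : Function.Surjective f)
    (l : LTSeries (PrimeSpectrum S)) (i) :
    RingHom.ker f ≤ ((chainComap f hf l).toFun i).asIdeal := by
  show RingHom.ker f ≤ ((l.toFun i).asIdeal).comap f
  rw [RingHom.ker_eq_comap_bot]
  exact Ideal.comap_mono bot_le

end Chains

section UpperBound


/-- Upper bound: a Noetherian ring all of whose prime chains have length `≤ e`
has length `< ω ^ (e+1)`. -/
theorem moduleLength_lt_opow :
    ∀ (e : ℕ) (T : Type u) [CommRing T] [IsNoetherianRing T],
      (∀ l : LTSeries (PrimeSpectrum T), l.length ≤ e) →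
      moduleLength T T < ω ^ ((e + 1 : ℕ) : Ordinal) := by
  intro e
  induction e using Nat.strong_induction_on with
  | _ e IHe =>
    intro T _ _ hds
    suffices hI : ∀ I : Ideal T, moduleLength T (T ⧸ I) < ω ^ ((e + 1 : ℕ) : Ordinal) by
      have h0 := hI ⊥
      rwa [moduleLength_congr ((⊥ : Submodule T T).quotEquivOfEqBot rfl)] at h0
    intro I
    induction I using IsWellFounded.induction (α := Ideal T) (· > ·) with
    | _ I IH =>
      by_cases htop : I = ⊤
      · subst htop
        rw [moduleLength_eq_zero_of_subsingleton
          (Submodule.Quotient.subsingleton_iff.2 rfl)]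
        exact opow_pos _ omega0_pos
      by_cases hprime : I.IsPrime
      · -- prime case
        rw [← wrank_eq_moduleLength_quotient]
        have hlt : ω ^ ((e : ℕ) : Ordinal) < ω ^ ((e + 1 : ℕ) : Ordinal) := by
          rw [opow_lt_opow_iff_right one_lt_omega0]
          exact_mod_cast Nat.lt_succ_self e
        refine lt_of_le_of_lt ?_ hlt
        rw [Submodule.wrank, IsWellFounded.rank_eq]
        refine Ordinal.iSup_le fun b => ?_
        obtain ⟨J, hJ⟩ := b
        rw [Order.succ_le_iff]
        show Submodule.wrank J < _
        match e, IHe, hds with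
        | 0, _, hds =>
          have hJtop : J = ⊤ := by
            by_contra hne
            obtain ⟨m, hm, hJm⟩ := Ideal.exists_le_maximal J hne
            have hIm : (⟨I, hprime⟩ : PrimeSpectrum T) < ⟨m, hm.isPrime⟩ := by
              rw [← PrimeSpectrum.asIdeal_lt_asIdeal]
              exact lt_of_lt_of_le hJ hJm
            have hlen := hds ((RelSeries.singleton _ ⟨m, hm.isPrime⟩).cons ⟨I, hprime⟩ (by rw [RelSeries.head_singleton]; exact hIm))
            simp [RelSeries.cons_length] at hlen
          rw [hJtop, Submodule.wrank_top]
          simpa using opow_pos ((0 : ℕ) : Ordinal) omega0_pos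
        | (e' + 1), IHe, hds =>
          rw [wrank_eq_moduleLength_quotient, moduleLength_quotient_ring (J : Ideal T)]
          have hds' : ∀ l : LTSeries (PrimeSpectrum (T ⧸ (J : Ideal T))), l.length ≤ e' := by
            intro l
            have hker : RingHom.ker (Ideal.Quotient.mk (J : Ideal T)) = J := Ideal.mk_ker
            have hJhead : I <
                ((chainComap _ Ideal.Quotient.mk_surjective l).toFun 0).asIdeal := by
              refine lt_of_lt_of_le hJ ?_
              have := ker_le_chainComap (Ideal.Quotient.mk (J : Ideal T))
                Ideal.Quotient.mk_surjective l 0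
              rwa [hker] at this
            have hIhead : (⟨I, hprime⟩ : PrimeSpectrum T) <
                (chainComap _ Ideal.Quotient.mk_surjective l).head := by
              rw [← PrimeSpectrum.asIdeal_lt_asIdeal]
              exact hJhead
            have hlen := hds (((chainComap _ Ideal.Quotient.mk_surjective l)).cons
              ⟨I, hprime⟩ hIhead)
            simp [RelSeries.cons, chainComap] at hlen
            omega
          have := IHe e' (by omega) (T ⧸ (J : Ideal T)) hds'
          exact this
      · -- non-prime, non-top case
        rw [Ideal.isPrime_iff] at hprime
        push_neg at hprime
        obtain ⟨a, b, hab, ha, hb⟩ := hprime htop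
        set π := (I : Submodule T T).mkQ with hπ
        set N : Submodule T (T ⧸ I) := Submodule.span T {π a} with hN
        -- the two bigger ideals
        set J1 : Ideal T := I ⊔ Ideal.span {a} with hJ1def
        set J2 : Ideal T := I.colon (Ideal.span {a}) with hJ2def
        have hJ1 : I < J1 := by
          refine lt_of_le_of_ne le_sup_left fun h => ha ?_
          rw [h]
          exact Ideal.mem_sup_right (Ideal.subset_span rfl)
        have hJ2 : I < J2 := by
          refine lt_of_le_of_ne (fun r hr => Ideal.mem_colon_span_singleton.2
            (Ideal.mul_mem_right a _ hr)) fun h => hb ?_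
          rw [h]
          exact Ideal.mem_colon_span_singleton.2 (by rwa [mul_comm])
        -- identify N with T ⧸ J2
        have hlenN : moduleLength T N = moduleLength T (T ⧸ J2) := by
          set f := LinearMap.toSpanSingleton T (T ⧸ (I : Submodule T T)) (π a) with hf
          have happ : ∀ r : T, f r = Submodule.Quotient.mk (r * a) := by
            intro r
            show r • π a = _
            rw [← map_smul, _root_.smul_eq_mul]
            rfl
          have hker : LinearMap.ker f = J2 := by
            ext r
            rw [LinearMap.mem_ker, happ, Submodule.Quotient.mk_eq_zero]
            exact Ideal.mem_colon_span_singleton.symm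
          have hrange : LinearMap.range f = N := (LinearMap.span_singleton_eq_range T _ _).symm
          calc moduleLength T N = moduleLength T (LinearMap.range f) :=
                moduleLength_congr (LinearEquiv.ofEq _ _ hrange.symm)
            _ = moduleLength T (T ⧸ LinearMap.ker f) :=
                (moduleLength_congr f.quotKerEquivRange).symm
            _ = moduleLength T (T ⧸ J2) :=
                moduleLength_congr (Submodule.quotEquivOfEq _ _ hker)
        -- identify (T⧸I)⧸N with T ⧸ J1
        have hlenQ : moduleLength T ((T ⧸ (I : Submodule T T)) ⧸ N) =
            moduleLength T (T ⧸ J1) := by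
          set g := N.mkQ.comp π with hg
          have hgsurj : Function.Surjective g := by
            rw [hg]
            exact (Submodule.mkQ_surjective N).comp (Submodule.mkQ_surjective _)
          have hkerg : LinearMap.ker g = J1 := by
            rw [hg, LinearMap.ker_comp, Submodule.ker_mkQ, hN, ← Set.image_singleton,
              ← Submodule.map_span, Submodule.comap_map_mkQ]
          calc moduleLength T ((T ⧸ (I : Submodule T T)) ⧸ N)
              = moduleLength T (T ⧸ LinearMap.ker g) :=
                (moduleLength_congr (g.quotKerEquivOfSurjective hgsurj)).symm
            _ = moduleLength T (T ⧸ J1) :=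
                moduleLength_congr (Submodule.quotEquivOfEq _ _ hkerg)
        have h1 := moduleLength_le_nadd N
        rw [hlenN, hlenQ] at h1
        exact lt_of_le_of_lt h1
          (nadd_lt_omega0_opow_nat (e + 1) (IH J2 hJ2) (IH J1 hJ1))

end UpperBound

section LowerBound


theorem ordinal_mul_trick {c L : Ordinal.{u}} (key : c + L ≤ L) (n : ℕ)
    (hc : ω ^ (n : Ordinal) ≤ c) : ω ^ ((n + 1 : ℕ) : Ordinal) ≤ L := by
  have hmono : ∀ m : ℕ, c * m + L ≤ L := by
    intro m
    induction m with
    | zero => simp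
    | succ m ih =>
      calc c * ((m + 1 : ℕ) : Ordinal) + L = c * m + (c + L) := by
            push_cast
            rw [mul_add, mul_one, add_assoc]
        _ ≤ c * m + L := add_le_add_right key _
        _ ≤ L := ih
  have hcast : ((n + 1 : ℕ) : Ordinal) = (n : Ordinal) + 1 := by push_cast; ring
  rw [hcast, opow_add, opow_one]
  rw [mul_le_iff_of_isSuccLimit isSuccLimit_omega0]
  intro b hb
  obtain ⟨m, rfl⟩ := lt_omega0.1 hb
  calc ω ^ (n : Ordinal) * m ≤ c * m := mul_le_mul_left hc _
    _ ≤ c * m + L := le_self_add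
    _ ≤ L := hmono m

/-- Lower bound: a chain of primes of length `n` forces `ω ^ n ≤ len R`. -/
theorem opow_le_moduleLength :
    ∀ (n : ℕ) (R : Type u) [CommRing R] [IsNoetherianRing R]
      (l : LTSeries (PrimeSpectrum R)), l.length = n →
      ω ^ (n : Ordinal) ≤ moduleLength R R := by
  intro n
  induction n with
  | zero =>
    intro R _ _ l _
    have : Nontrivial R := by
      rcases subsingleton_or_nontrivial R with h | h
      · exact absurd (Subsingleton.elim l.head.asIdeal ⊤) l.head.isPrime.ne_top
      · exact h
    simpa using one_le_moduleLength_of_nontrivial this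
  | succ n IHn =>
    intro R _ _ l hl
    have h0b : 0 < l.length + 1 := by omega
    have h1b : 1 < l.length + 1 := by omega
    set p0 : Ideal R := (l.toFun ⟨0, h0b⟩).asIdeal with hp0
    haveI hp0p : p0.IsPrime := (l.toFun ⟨0, h0b⟩).isPrime
    have hkerle : ∀ i, RingHom.ker (Ideal.Quotient.mk p0) ≤ (l.toFun i).asIdeal := by
      intro i
      rw [Ideal.mk_ker]
      exact (PrimeSpectrum.asIdeal_le_asIdeal _ _).2 (l.monotone (by
        rw [Fin.le_def]; exact Nat.zero_le _))
    set l1 := chainMapSurj (Ideal.Quotient.mk p0) Ideal.Quotient.mk_surjective l hkerle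
      with hl1
    have hl1len : l1.length = n + 1 := by rw [hl1, chainMapSurj_length, hl]
    have h0b' : 0 < l1.length + 1 := by omega
    have h1b' : 1 < l1.length + 1 := by omega
    have hstep01 : l1.toFun ⟨0, h0b'⟩ < l1.toFun ⟨1, h1b'⟩ := by
      apply l1.strictMono
      rw [Fin.mk_lt_mk]
      omega
    have hlt2 : (l1.toFun ⟨0, h0b'⟩).asIdeal < (l1.toFun ⟨1, h1b'⟩).asIdeal :=
      (PrimeSpectrum.asIdeal_lt_asIdeal _ _).2 hstep01
    have hbot : (l1.toFun ⟨0, h0b'⟩).asIdeal = ⊥ := by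
      show Ideal.map (Ideal.Quotient.mk p0) (l.toFun ⟨0, h0b⟩).asIdeal = ⊥
      exact Ideal.map_quotient_self p0
    rw [hbot, bot_lt_iff_ne_bot, Submodule.ne_bot_iff] at hlt2
    obtain ⟨x, hxmem, hxne⟩ := hlt2
    -- x is a nonzero element of the domain S := R ⧸ p0
    -- tail chain in S ⧸ (x)
    have hltail : ∀ i : Fin (n + 1), i.1 + 1 < l1.length + 1 := fun i => by omega
    set ltail : LTSeries (PrimeSpectrum (R ⧸ p0)) :=
      { length := n
        toFun := fun i => l1.toFun ⟨i.1 + 1, hltail i⟩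
        step := fun i => l1.strictMono (by rw [Fin.mk_lt_mk]; simp) } with hltl
    have hker2 : ∀ i, RingHom.ker (Ideal.Quotient.mk (Ideal.span {x})) ≤
        (ltail.toFun i).asIdeal := by
      intro i
      rw [Ideal.mk_ker, Ideal.span_le, Set.singleton_subset_iff]
      have hmono : l1.toFun ⟨1, h1b'⟩ ≤ l1.toFun ⟨i.1 + 1, hltail i⟩ :=
        l1.monotone (by rw [Fin.mk_le_mk]; omega)
      exact (PrimeSpectrum.asIdeal_le_asIdeal _ _).2 hmono hxmem
    have hlow := IHn _ (chainMapSurj (Ideal.Quotient.mk (Ideal.span {x}))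
      Ideal.Quotient.mk_surjective ltail hker2) rfl
    rw [← moduleLength_quotient_ring] at hlow
    -- the principal ideal (x) is isomorphic to S as a module
    have hxiso : moduleLength (R ⧸ p0) (Ideal.span {x} : Ideal (R ⧸ p0)) =
        moduleLength (R ⧸ p0) (R ⧸ p0) := by
      have hinj : Function.Injective (LinearMap.toSpanSingleton (R ⧸ p0) (R ⧸ p0) x) := by
        rw [← LinearMap.ker_eq_bot]
        ext r
        simp only [LinearMap.mem_ker, Submodule.mem_bot]
        constructor
        · intro hr
          have hrx : r * x = 0 := hr
          rcases mul_eq_zero.1 hrx with h | h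
          · exact h
          · exact absurd h hxne
        · rintro rfl; simp
      have hrange : LinearMap.range (LinearMap.toSpanSingleton (R ⧸ p0) (R ⧸ p0) x) =
          (Ideal.span {x} : Ideal (R ⧸ p0)) :=
        (LinearMap.span_singleton_eq_range (R ⧸ p0) (R ⧸ p0) x).symm
      calc moduleLength (R ⧸ p0) (Ideal.span {x} : Ideal (R ⧸ p0))
          = moduleLength (R ⧸ p0)
              (LinearMap.range (LinearMap.toSpanSingleton (R ⧸ p0) (R ⧸ p0) x)) :=
            moduleLength_congr (LinearEquiv.ofEq _ _ hrange.symm)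
        _ = moduleLength (R ⧸ p0) (R ⧸ p0) :=
            (moduleLength_congr (LinearEquiv.ofInjective _ hinj)).symm
    have key : moduleLength (R ⧸ p0) ((R ⧸ p0) ⧸ Ideal.span {x}) +
        moduleLength (R ⧸ p0) (R ⧸ p0) ≤ moduleLength (R ⧸ p0) (R ⧸ p0) := by
      have h := add_moduleLength_le (R := R ⧸ p0) (M := R ⧸ p0)
        (Ideal.span {x} : Ideal (R ⧸ p0))
      rwa [hxiso] at h
    have hLn := ordinal_mul_trick key n hlow
    calc ω ^ ((n + 1 : ℕ) : Ordinal) ≤ moduleLength (R ⧸ p0) (R ⧸ p0) := hLn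
      _ = moduleLength R (R ⧸ p0) := (moduleLength_quotient_ring p0).symm
      _ = Submodule.wrank (p0 : Submodule R R) := (wrank_eq_moduleLength_quotient _).symm
      _ ≤ Submodule.wrank (⊥ : Submodule R R) := Submodule.wrank_anti bot_le
      _ = moduleLength R R := rfl

end LowerBound

section DimHelpers

universe v

theorem krullDim_le_of_forall_length_le {α : Type v} [Preorder α] {m : ℕ}
    (h : ∀ l : LTSeries α, l.length ≤ m) : Order.krullDim α ≤ m :=
  iSup_le fun p => by exact_mod_cast h p

theorem forall_length_le_of_krullDim_le {α : Type v} [Preorder α] {m : ℕ}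
    (h : Order.krullDim α ≤ m) (l : LTSeries α) : l.length ≤ m := by
  have h2 := (Order.LTSeries.length_le_krullDim l).trans h
  exact_mod_cast h2

theorem exists_length_ge_of_le_krullDim {α : Type v} [Preorder α] [Nonempty α] {m : ℕ}
    (h : (m : WithBot ℕ∞) ≤ Order.krullDim α) : ∃ l : LTSeries α, m ≤ l.length := by
  by_contra hno
  push_neg at hno
  have hm1 : 1 ≤ m := by
    have := hno (RelSeries.singleton _ (Classical.arbitrary α))
    exact Nat.succ_le_of_lt (by simpa using this)
  have h2 : Order.krullDim α ≤ ((m - 1 : ℕ) : WithBot ℕ∞) :=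
    krullDim_le_of_forall_length_le fun l => by have := hno l; omega
  have h3 : (m : WithBot ℕ∞) ≤ ((m - 1 : ℕ) : WithBot ℕ∞) := h.trans h2
  have h4 : m ≤ m - 1 := by exact_mod_cast h3
  omega

theorem isDomain_of_bot_isPrime (R : Type u) [CommRing R] (h : (⊥ : Ideal R).IsPrime) :
    IsDomain R := by
  have hnt : Nontrivial R := by
    rcases subsingleton_or_nontrivial R with hs | hs
    · exact absurd (Subsingleton.elim (⊥ : Ideal R) ⊤) h.ne_top
    · exact hs
  have : NoZeroDivisors R := by
    constructor
    intro a b hab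
    have : a * b ∈ (⊥ : Ideal R) := by simpa using hab
    simpa using h.mem_or_mem this
  exact NoZeroDivisors.to_isDomain R

end DimHelpers

section Main


/-- A finite-dimensional Noetherian ring has ordinal length `ω ^ d` if and only if it is a
`d`-dimensional integral domain. -/
theorem moduleLength_eq_omega_pow_iff
    (R : Type u) [CommRing R] [IsNoetherianRing R] (hdim : ringKrullDim R < ⊤) (d : ℕ) :
    moduleLength R R = ω ^ (d : Ordinal) ↔ IsDomain R ∧ ringKrullDim R = d := by
  constructor
  · -- forward direction
    intro h
    have hnt : Nontrivial R := by
      rcases subsingleton_or_nontrivial R with hs | hs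
      · exfalso
        rw [moduleLength_eq_zero_of_subsingleton hs] at h
        exact (opow_pos (d : Ordinal) omega0_pos).ne' h.symm
      · exact hs
    -- the dimension is some natural number e
    obtain ⟨e, he⟩ : ∃ e : ℕ, ringKrullDim R = (e : WithBot ℕ∞) := by
      have hge : (0 : WithBot ℕ∞) ≤ ringKrullDim R :=
        Order.krullDim_nonneg
      have hnb : ringKrullDim R ≠ ⊥ := by
        intro hbot
        rw [hbot] at hge
        simp at hge
      obtain ⟨m, hm⟩ := WithBot.ne_bot_iff_exists.1 hnb
      have hmtop : m ≠ ⊤ := by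
        rintro rfl
        rw [← hm] at hdim
        exact absurd hdim (by simp [top_le_iff])
      obtain ⟨e, rfl⟩ := WithTop.ne_top_iff_exists.1 hmtop
      exact ⟨e, by rw [← hm]; norm_cast⟩
    have hds : ∀ l : LTSeries (PrimeSpectrum R), l.length ≤ e :=
      forall_length_le_of_krullDim_le (le_of_eq he)
    obtain ⟨l, hlge⟩ : ∃ l : LTSeries (PrimeSpectrum R), e ≤ l.length :=
      exists_length_ge_of_le_krullDim (le_of_eq he.symm)
    -- squeeze: e = d
    have hlow : ω ^ (e : Ordinal) ≤ moduleLength R R := by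
      refine le_trans ?_ (opow_le_moduleLength l.length R l rfl)
      exact opow_le_opow_right omega0_pos (by exact_mod_cast hlge)
    have hup : moduleLength R R < ω ^ ((e + 1 : ℕ) : Ordinal) :=
      moduleLength_lt_opow e R hds
    have hed : e = d := by
      have h1 : (e : Ordinal) ≤ (d : Ordinal) := by
        rw [← opow_le_opow_iff_right one_lt_omega0, ← h]
        exact hlow
      have h2 : (d : Ordinal) < ((e + 1 : ℕ) : Ordinal) := by
        rw [← opow_lt_opow_iff_right one_lt_omega0, ← h]
        exact hup
      have h1' : e ≤ d := by exact_mod_cast h1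
      have h2' : d < e + 1 := by exact_mod_cast h2
      omega
    subst hed
    refine ⟨?_, he⟩
    -- now show R is a domain
    by_contra hnd
    have h0b : 0 < l.length + 1 := by omega
    set p : Ideal R := (l.toFun ⟨0, h0b⟩).asIdeal with hp
    haveI hpp : p.IsPrime := (l.toFun ⟨0, h0b⟩).isPrime
    have hpne : p ≠ ⊥ := by
      intro hbot
      exact hnd (isDomain_of_bot_isPrime R (hbot ▸ hpp))
    -- length of R/p is at least ω^e
    have hkerle : ∀ i, RingHom.ker (Ideal.Quotient.mk p) ≤ (l.toFun i).asIdeal := by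
      intro i
      rw [Ideal.mk_ker]
      exact (PrimeSpectrum.asIdeal_le_asIdeal _ _).2 (l.monotone (by
        rw [Fin.le_def]; exact Nat.zero_le _))
    have hq : ω ^ (e : Ordinal) ≤ moduleLength R (R ⧸ p) := by
      rw [moduleLength_quotient_ring p]
      refine le_trans ?_ (opow_le_moduleLength _ (R ⧸ p)
        (chainMapSurj (Ideal.Quotient.mk p) Ideal.Quotient.mk_surjective l hkerle) rfl)
      rw [chainMapSurj_length]
      exact opow_le_opow_right omega0_pos (by exact_mod_cast hlge)
    have hplen : 1 ≤ moduleLength R (p : Submodule R R) :=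
      one_le_moduleLength_of_nontrivial (Submodule.nontrivial_iff_ne_bot.2 hpne)
    have hcontra := add_moduleLength_le (R := R) (M := R) (p : Submodule R R)
    rw [h] at hcontra
    have : ω ^ (e : Ordinal) + 1 ≤ ω ^ (e : Ordinal) :=
      le_trans (add_le_add hq hplen) hcontra
    have hlt : ω ^ (e : Ordinal) < ω ^ (e : Ordinal) + 1 := lt_add_one _
    exact absurd (lt_of_lt_of_le hlt this) (lt_irrefl _)
  · -- backward direction
    rintro ⟨hdom, hd⟩
    have hnt : Nontrivial R := inferInstance
    have hds : ∀ l : LTSeries (PrimeSpectrum R), l.length ≤ d :=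
      forall_length_le_of_krullDim_le (le_of_eq hd)
    obtain ⟨l, hlge⟩ : ∃ l : LTSeries (PrimeSpectrum R), d ≤ l.length :=
      exists_length_ge_of_le_krullDim (le_of_eq hd.symm)
    have hlow : ω ^ (d : Ordinal) ≤ moduleLength R R := by
      refine le_trans ?_ (opow_le_moduleLength l.length R l rfl)
      exact opow_le_opow_right omega0_pos (by exact_mod_cast hlge)
    refine le_antisymm ?_ hlow
    -- upper bound
    rw [moduleLength_eq_wrank, Submodule.wrank, IsWellFounded.rank_eq]
    refine Ordinal.iSup_le fun b => ?_
    obtain ⟨I, hI⟩ := b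
    rw [Order.succ_le_iff]
    show Submodule.wrank I < _
    match d, hds with
    | 0, hds =>
      have hItop : I = ⊤ := by
        by_contra hne
        obtain ⟨m, hm, hIm⟩ := Ideal.exists_le_maximal I hne
        have hbm : (⟨⊥, Ideal.bot_prime⟩ : PrimeSpectrum R) < ⟨m, hm.isPrime⟩ := by
          rw [← PrimeSpectrum.asIdeal_lt_asIdeal]
          exact lt_of_lt_of_le hI hIm
        have hlen := hds ((RelSeries.singleton _ ⟨m, hm.isPrime⟩).cons
          ⟨⊥, Ideal.bot_prime⟩ (by rw [RelSeries.head_singleton]; exact hbm))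
        simp [RelSeries.cons_length] at hlen
      rw [hItop, Submodule.wrank_top]
      simpa using opow_pos ((0 : ℕ) : Ordinal) omega0_pos
    | (d' + 1), hds =>
      rw [wrank_eq_moduleLength_quotient, moduleLength_quotient_ring (I : Ideal R)]
      have hds' : ∀ l' : LTSeries (PrimeSpectrum (R ⧸ (I : Ideal R))), l'.length ≤ d' := by
        intro l'
        have hIhead : (⟨⊥, Ideal.bot_prime⟩ : PrimeSpectrum R) <
            (chainComap _ Ideal.Quotient.mk_surjective l').head := by
          rw [← PrimeSpectrum.asIdeal_lt_asIdeal]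
          refine lt_of_lt_of_le hI ?_
          have := ker_le_chainComap (Ideal.Quotient.mk (I : Ideal R))
            Ideal.Quotient.mk_surjective l' 0
          rwa [Ideal.mk_ker] at this
        have hlen := hds (((chainComap _ Ideal.Quotient.mk_surjective l')).cons
          ⟨⊥, Ideal.bot_prime⟩ hIhead)
        simp [RelSeries.cons, chainComap] at hlen
        omega
      exact moduleLength_lt_opow d' (R ⧸ (I : Ideal R)) hds'

end Main
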